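/- Let N = (V, E, c) be a network, let f_1, …, f_n be flows on N, and for each i let paths(f_i) be a finite list of simple valid paths for f_i. If (α, ρ, ε) is an ILP assignment satisfying constraints (i)–(iv), then: (a) for each i there is at most one index m with ρ_{i,m} = 1; (b) the induced mapping S (sending f_i to paths(f_i)_m when ρ_{i,m} = 1 and to the empty path otherwise) assigns to every flow a simple path that is valid for it; and (c) for every edge (j,l) ∈ E, the sum of b(f_i) over all flows f_i whose assigned path S(f_i) traverses (j,l) is at most c((j,l)); in particular S is a feasible mapping. -/

import Mathlib

/-- A network flow: source node, destination node, and required bandwidth. -/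
structure NetFlow (V : Type) where
  s : V
  d : V
  b : ℕ

/-- The list of nodes visited by a path (a path is a list of directed edges). -/
def pathNodes {V : Type} : List (V × V) → List V
  | [] => []
  | e :: rest => e.1 :: (e :: rest).map Prod.snd

/-- A path is simple if it visits no node twice. -/
def IsSimplePath {V : Type} (p : List (V × V)) : Prop :=
  (pathNodes p).Nodup

/-- A (nonempty) path is valid for source `s` and destination `d` in edge set `E`:
all its edges lie in `E`, it starts at `s`, ends at `d`, and is connected. -/
def IsValidPath {V : Type} (E : Finset (V × V)) (s d : V) (p : List (V × V)) : Prop :=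
  p ≠ [] ∧ (∀ e ∈ p, e ∈ E) ∧ p.head?.map Prod.fst = some s ∧
    p.getLast?.map Prod.snd = some d ∧ p.Chain' (fun e e' => e.2 = e'.1)

/-- A mapping `S` of flows to paths (the empty path `[]` meaning the flow is dropped) is
feasible if every assigned path is simple and valid for its flow, and for every edge the
total bandwidth of the flows routed through it does not exceed its capacity. -/
def Feasible {V : Type} [DecidableEq V] {n : ℕ} (E : Finset (V × V)) (c : V × V → ℕ)
    (f : Fin n → NetFlow V) (S : Fin n → List (V × V)) : Prop :=
  (∀ i, S i = [] ∨ (IsSimplePath (S i) ∧ IsValidPath E (f i).s (f i).d (S i))) ∧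
  ∀ e ∈ E, (∑ i, if e ∈ S i then (f i).b else 0) ≤ c e

/-- The ILP constraints (binarity of all variables together with constraints (i)–(iv)). -/
def ILPConstraints {V : Type} {n : ℕ} (E : Finset (V × V)) (c : V × V → ℕ)
    (f : Fin n → NetFlow V) (paths : Fin n → List (List (V × V)))
    (α : Fin n → ℕ) (ρ : (i : Fin n) → Fin (paths i).length → ℕ)
    (ε : Fin n → V × V → ℕ) : Prop :=
  (∀ i, α i ≤ 1) ∧ (∀ i m, ρ i m ≤ 1) ∧ (∀ i e, ε i e ≤ 1) ∧
  -- (i) a flow is admitted iff exactly one of its candidate paths is chosen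
  (∀ i, (∑ m, ρ i m) = α i) ∧
  -- (ii) if a path is chosen, all its edges must route the flow
  (∀ i (m : Fin (paths i).length),
      ((paths i).get m).length * ρ i m ≤ (((paths i).get m).map (ε i)).sum) ∧
  -- (iii) capacity of every edge is respected
  (∀ e ∈ E, (∑ i, (f i).b * ε i e) ≤ c e) ∧
  -- (iv) edges not occurring in any candidate path of a flow cannot route it
  (∀ i e, (∀ p ∈ paths i, e ∉ p) → ε i e = 0)

/-- The total priority of the flows admitted by a mapping `S`. -/
def admittedPriority {V : Type} [DecidableEq V] {n : ℕ} (P : NetFlow V → ℕ)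
    (f : Fin n → NetFlow V) (S : Fin n → List (V × V)) : ℕ :=
  ∑ i, if S i ≠ [] then P (f i) else 0

lemma all_one_of_sum {A : Type*} : ∀ (l : List A) (g : A → ℕ), (∀ a, g a ≤ 1) →
    l.length ≤ (l.map g).sum → ∀ a ∈ l, g a = 1 := by
  intro l
  induction l with
  | nil => simp
  | cons a l ih =>
    intro g hg hsum b hb
    simp only [List.map_cons, List.sum_cons, List.length_cons] at hsum
    have h1 : g a = 1 := by
      have := hg a
      have hle : (l.map g).sum ≤ l.length := by
        have := List.sum_le_card_nsmul (l.map g) 1 (by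
          intro x hx
          rcases List.mem_map.mp hx with ⟨y, _, rfl⟩
          exact hg y)
        simpa using this
      omega
    rw [List.mem_cons] at hb
    rcases hb with rfl | hb
    · exact h1
    · exact ih g hg (by omega) b hb


/-- Any ILP assignment satisfying constraints (i)–(iv) selects at most one path per flow,
and the induced mapping assigns to every flow a simple valid (or empty) path and respects
all edge capacities; in particular it is a feasible mapping. -/


theorem ilp_assignment_induces_feasible_mapping {V : Type} [DecidableEq V] {n : ℕ}
    (E : Finset (V × V)) (c : V × V → ℕ) (f : Fin n → NetFlow V)
    (paths : Fin n → List (List (V × V)))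
    -- every member of `paths i` is a simple valid path for the flow `f i`
    (hpaths : ∀ i, ∀ p ∈ paths i, IsSimplePath p ∧ IsValidPath E (f i).s (f i).d p)
    (α : Fin n → ℕ) (ρ : (i : Fin n) → Fin (paths i).length → ℕ)
    (ε : Fin n → V × V → ℕ)
    (hILP : ILPConstraints E c f paths α ρ ε)
    (S : Fin n → List (V × V))
    -- `S` sends `f i` to `paths(f_i)_m` whenever `ρ i m = 1`, and to the empty path otherwise
    (hS₁ : ∀ i m, ρ i m = 1 → S i = (paths i).get m)
    (hS₂ : ∀ i, (∀ m, ρ i m ≠ 1) → S i = []) :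
    -- (a) at most one path index is selected per flow
    (∀ i (m m' : Fin (paths i).length), ρ i m = 1 → ρ i m' = 1 → m = m') ∧
    -- (b) every flow is assigned a simple valid path (or the empty path)
    (∀ i, S i = [] ∨ (IsSimplePath (S i) ∧ IsValidPath E (f i).s (f i).d (S i))) ∧
    -- (c) the bandwidth routed through every edge does not exceed its capacity
    (∀ e ∈ E, (∑ i, if e ∈ S i then (f i).b else 0) ≤ c e) ∧
    -- in particular, `S` is a feasible mapping
    Feasible E c f S := by

  obtain ⟨hα, hρ, hε, hi, hii, hiii, hiv⟩ := hILP
  have ha : ∀ i (m m' : Fin (paths i).length), ρ i m = 1 → ρ i m' = 1 → m = m' := by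
    intro i m m' hm hm'
    by_contra hne
    have hsub : ({m, m'} : Finset _) ⊆ Finset.univ := Finset.subset_univ _
    have h2 : (2 : ℕ) ≤ ∑ k, ρ i k := by
      have := Finset.sum_le_sum_of_subset hsub (f := ρ i)
      rw [Finset.sum_pair hne, hm, hm'] at this
      exact this
    have := hi i
    have := hα i
    omega
  have heps : ∀ i e, e ∈ S i → ε i e = 1 := by
    intro i e he
    by_cases hex : ∃ m, ρ i m = 1
    · obtain ⟨m, hm⟩ := hex
      have hSi := hS₁ i m hm
      have h2 := hii i m
      rw [hm, mul_one] at h2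
      exact all_one_of_sum _ _ (hε i) h2 e (hSi ▸ he)
    · push_neg at hex
      rw [hS₂ i hex] at he
      simp at he
  have hb : ∀ i, S i = [] ∨ (IsSimplePath (S i) ∧ IsValidPath E (f i).s (f i).d (S i)) := by
    intro i
    by_cases hex : ∃ m, ρ i m = 1
    · obtain ⟨m, hm⟩ := hex
      right
      rw [hS₁ i m hm]
      exact hpaths i _ (List.get_mem _ _)
    · push_neg at hex
      exact Or.inl (hS₂ i hex)
  have hc : ∀ e ∈ E, (∑ i, if e ∈ S i then (f i).b else 0) ≤ c e := by
    intro e heE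
    calc (∑ i, if e ∈ S i then (f i).b else 0) ≤ ∑ i, (f i).b * ε i e := by
          apply Finset.sum_le_sum
          intro i _
          by_cases he : e ∈ S i
          · simp [he, heps i e he]
          · simp [he]
      _ ≤ c e := hiii e heE
  exact ⟨ha, hb, hc, hb, hc⟩
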